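/- If X is a well-layered prechart and U ⊆ X is a subcoalgebra of X, then U is well-layered: the restriction of any layering witness of X to U is a layering witness for U. -/

import Mathlib

universe u

/-- A prechart: a coalgebra for the functor `P(X) = 2^A × Pfin(X)^A`. -/
structure Prechart (A : Type) (X : Type u) where
  out : X → A → Prop
  tr : X → A → Set X
  fin : ∀ x a, (tr x a).Finite

namespace Prechart

variable {A : Type} {X Y : Type u}

/-- `h` is a `P`-coalgebra homomorphism from `c` to `d`. -/
def IsHom (c : Prechart A X) (d : Prechart A Y) (h : X → Y) : Prop :=
  (∀ x a, c.out x a ↔ d.out (h x) a) ∧ ∀ x a, d.tr (h x) a = h '' c.tr x a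

/-- `R` is a bisimulation between precharts `c` and `d`: it carries a prechart
structure making both projections coalgebra homomorphisms. -/
def IsBisim (c : Prechart A X) (d : Prechart A Y) (R : X → Y → Prop) : Prop :=
  ∃ e : Prechart A {p : X × Y // R p.1 p.2},
    IsHom e c (fun p => p.1.1) ∧ IsHom e d (fun p => p.1.2)

end Prechart

/-- A transition system with output carrying an entry/body labelling:
a coalgebra for `2 × Pfin({e,b} × (−))`, presented by separate entry- and
body-transition relations. -/
structure EBL (X : Type u) where
  out : X → Prop
  etr : X → Set X
  btr : X → Set X
  fin : ∀ x, (etr x ∪ btr x).Finite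

namespace EBL

variable {X : Type u}

/-- A single (entry or body) transition of the underlying transition system. -/
def step (L : EBL X) (x y : X) : Prop := y ∈ L.etr x ∨ y ∈ L.btr x

/-- `x ⇝ y`: there is a path `x →e v₁ →b ⋯ →b y` never revisiting `x`. -/
def diredge (L : EBL X) (x y : X) : Prop :=
  ∃ v, v ∈ L.etr x ∧ v ≠ x ∧ Relation.ReflTransGen (fun u w => w ∈ L.btr u ∧ w ≠ x) v y

/-- The five conditions making an entry/body labelling a layering witness:
locally finite, flat, fully specified, layered, and goto-free. -/
def IsLayeringWitness (L : EBL X) : Prop :=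
  (∀ x, {y | Relation.ReflTransGen L.step x y}.Finite) ∧
  (∀ x y, y ∈ L.etr x → y ∉ L.btr x) ∧
  (∀ x, ¬ Relation.TransGen (fun u w => w ∈ L.btr u) x x) ∧
  (∀ x y, y ∈ L.etr x → y ≠ x → Relation.TransGen L.step y x) ∧
  (∀ x, ¬ Relation.TransGen L.diredge x x) ∧
  (∀ x y, L.diredge x y → ¬ L.out y)

/-- `L` is a layering witness for the prechart `c`: its underlying transition
system (forgetting action labels) is that of `c`, and it satisfies the five
layering-witness conditions. -/
def IsWitnessFor {A : Type} (L : EBL X) (c : Prechart A X) : Prop :=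
  (∀ x, L.out x ↔ ∃ a, c.out x a) ∧
  (∀ x, L.etr x ∪ L.btr x = ⋃ a, c.tr x a) ∧
  L.IsLayeringWitness

end EBL

/-- A prechart is well-layered if it admits a layering witness. -/
def WellLayered {A : Type} {X : Type u} (c : Prechart A X) : Prop :=
  ∃ L : EBL X, L.IsWitnessFor c

/-- The restriction of a prechart to a subset `U` of its carrier. -/
def Prechart.restrict {A : Type} {X : Type u} (c : Prechart A X) (U : Set X) :
    Prechart A U where
  out u a := c.out u.1 a
  tr u a := {v : U | v.1 ∈ c.tr u.1 a}
  fin u a := (c.fin u.1 a).preimage Subtype.val_injective.injOn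

/-- The restriction of an entry/body labelling to a subset `U`. -/
def EBL.restrict {X : Type u} (L : EBL X) (U : Set X) : EBL U where
  out u := L.out u.1
  etr u := {v : U | v.1 ∈ L.etr u.1}
  btr u := {v : U | v.1 ∈ L.btr u.1}
  fin u := by
    have h : ({v : U | v.1 ∈ L.etr u.1} ∪ {v : U | v.1 ∈ L.btr u.1})
        = Subtype.val ⁻¹' (L.etr u.1 ∪ L.btr u.1) := by
      ext v; simp [Set.mem_union, Set.preimage]
    rw [h]
    exact (L.fin u.1).preimage Subtype.val_injective.injOn

/-- Subcoalgebras of well-layered precharts are well-layered: the restriction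
of any layering witness to a subcoalgebra `U` is a layering witness for the
restricted prechart. -/
theorem stmt10 {A : Type} {X : Type u} (c : Prechart A X) (U : Set X)
    (hU : ∀ x ∈ U, ∀ a, c.tr x a ⊆ U)
    (L : EBL X) (hL : L.IsWitnessFor c) :
    (L.restrict U).IsWitnessFor (c.restrict U) ∧ WellLayered (c.restrict U) := by
  obtain ⟨hout, htr, hfin, hflat, hbody, hfull, hlay, hgoto⟩ := hL
  -- step in restriction iff step of values
  have hstep_down : ∀ u v : U, (L.restrict U).step u v → L.step u.1 v.1 := by
    rintro u v (h | h)
    · exact Or.inl h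
    · exact Or.inr h
  -- U is closed under L.step
  have hclosed : ∀ x ∈ U, ∀ y, L.step x y → y ∈ U := by
    intro x hx y hy
    have : y ∈ L.etr x ∪ L.btr x := hy
    rw [htr x] at this
    obtain ⟨s, ⟨a, rfl⟩, hs⟩ := this
    exact hU x hx a hs
  have hstep_up : ∀ {x z : X} (hx : x ∈ U), Relation.TransGen L.step x z →
      ∃ hz : z ∈ U, Relation.TransGen ((L.restrict U).step) ⟨x, hx⟩ ⟨z, hz⟩ := by
    intro x z hx h
    induction h with
    | single hxy =>
        refine ⟨hclosed x hx _ hxy, Relation.TransGen.single ?_⟩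
        rcases hxy with h | h
        · exact Or.inl h
        · exact Or.inr h
    | tail hxy hyz ih =>
        obtain ⟨hy, hty⟩ := ih
        refine ⟨hclosed _ hy _ hyz, hty.tail ?_⟩
        rcases hyz with h | h
        · exact Or.inl h
        · exact Or.inr h
  have hdir : ∀ u v : U, (L.restrict U).diredge u v → L.diredge u.1 v.1 := by
    rintro u v ⟨w, hw, hwne, hpath⟩
    refine ⟨w.1, hw, fun h => hwne (Subtype.ext h), ?_⟩
    refine Relation.ReflTransGen.lift Subtype.val ?_ _ _ hpath
    rintro a b ⟨hb, hbne⟩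
    exact ⟨hb, fun h => hbne (Subtype.ext h)⟩
  have hwit : (L.restrict U).IsWitnessFor (c.restrict U) := by
    refine ⟨?_, ?_, ?_, ?_, ?_, ?_, ?_, ?_⟩
    · intro u
      simpa [EBL.restrict, Prechart.restrict] using hout u.1
    · intro u
      ext v
      have := htr u.1
      constructor
      · rintro (h | h)
        · have : v.1 ∈ ⋃ a, c.tr u.1 a := by rw [← htr u.1]; exact Or.inl h
          obtain ⟨s, ⟨a, rfl⟩, hs⟩ := this
          exact Set.mem_iUnion.2 ⟨a, hs⟩
        · have : v.1 ∈ ⋃ a, c.tr u.1 a := by rw [← htr u.1]; exact Or.inr h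
          obtain ⟨s, ⟨a, rfl⟩, hs⟩ := this
          exact Set.mem_iUnion.2 ⟨a, hs⟩
      · intro h
        obtain ⟨a, hs⟩ := Set.mem_iUnion.1 h
        have : v.1 ∈ L.etr u.1 ∪ L.btr u.1 := by
          rw [htr u.1]; exact Set.mem_iUnion.2 ⟨a, hs⟩
        rcases this with h | h
        · exact Or.inl h
        · exact Or.inr h
    · -- locally finite
      intro u
      have hmap : {v : U | Relation.ReflTransGen ((L.restrict U).step) u v} ⊆
          Subtype.val ⁻¹' {y | Relation.ReflTransGen L.step u.1 y} := by
        intro v hv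
        exact Relation.ReflTransGen.lift Subtype.val
          (fun a b h => hstep_down a b h) _ _ hv
      exact Set.Finite.subset (((hfin u.1)).preimage Subtype.val_injective.injOn) hmap
    · -- flat
      intro u v he hb
      exact hflat u.1 v.1 he hb
    · -- no body cycles
      intro u h
      exact hbody u.1 (Relation.TransGen.lift Subtype.val (fun a b hab => hab) _ _ h)
    · -- fully specified
      intro u v he hne
      have : Relation.TransGen L.step v.1 u.1 :=
        hfull u.1 v.1 he (fun h => hne (Subtype.ext h))
      obtain ⟨hu, ht⟩ := hstep_up v.2 this
      convert ht using 2
    · -- layered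
      intro u h
      exact hlay u.1 (Relation.TransGen.lift Subtype.val (fun a b hab => hdir a b hab) _ _ h)
    · -- goto-free
      intro u v h
      exact hgoto u.1 v.1 (hdir u v h)
  exact ⟨hwit, _, hwit⟩
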